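/- Let H be a 3-uniform hypergraph and suppose there is a vertex x whose link graph L(x) contains three pairwise vertex-disjoint edges e₁, e₂, e₃ such that every triple {x₁, x₂, x₃} with xᵢ ∈ eᵢ (i = 1,2,3) is a hyperedge of H. Then H contains a copy of the Fano plane. -/

import Mathlib

/-- The lines of the Fano plane (projective plane over F₂) on seven points. -/
def fanoLines : Finset (Finset (Fin 7)) :=
  {{0, 1, 2}, {0, 3, 4}, {0, 5, 6}, {1, 3, 5}, {1, 4, 6}, {2, 3, 6}, {2, 4, 5}}

/-- A 3-uniform hypergraph with hyperedge set `E` contains a copy of the Fano plane. -/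
def ContainsFano {V : Type*} [DecidableEq V] (E : Set (Finset V)) : Prop :=
  ∃ f : Fin 7 → V, Function.Injective f ∧ ∀ l ∈ fanoLines, l.image f ∈ E

theorem stmt_8 {V : Type*} [DecidableEq V] (E : Set (Finset V))
    (h3 : ∀ e ∈ E, e.card = 3) (x : V) (e₁ e₂ e₃ : Finset V)
    (hc1 : e₁.card = 2) (hc2 : e₂.card = 2) (hc3 : e₃.card = 2)
    (hdisj : (insert x (e₁ ∪ e₂ ∪ e₃)).card = 7)
    (he₁ : insert x e₁ ∈ E) (he₂ : insert x e₂ ∈ E) (he₃ : insert x e₃ ∈ E)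
    (hcross : ∀ x₁ ∈ e₁, ∀ x₂ ∈ e₂, ∀ x₃ ∈ e₃, ({x₁, x₂, x₃} : Finset V) ∈ E) :
    ContainsFano E := by
  obtain ⟨a, b, hab, rfl⟩ := Finset.card_eq_two.mp hc1
  obtain ⟨c, d, hcd, rfl⟩ := Finset.card_eq_two.mp hc2
  obtain ⟨e, f, hef, rfl⟩ := Finset.card_eq_two.mp hc3
  have h0 : ![x, a, b, c, d, e, f] (0 : Fin 7) = x := rfl
  have h1 : ![x, a, b, c, d, e, f] (1 : Fin 7) = a := rfl
  have h2 : ![x, a, b, c, d, e, f] (2 : Fin 7) = b := rfl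
  have h3' : ![x, a, b, c, d, e, f] (3 : Fin 7) = c := rfl
  have h4 : ![x, a, b, c, d, e, f] (4 : Fin 7) = d := rfl
  have h5 : ![x, a, b, c, d, e, f] (5 : Fin 7) = e := rfl
  have h6 : ![x, a, b, c, d, e, f] (6 : Fin 7) = f := rfl
  have huniv : (Finset.univ : Finset (Fin 7)) = {0, 1, 2, 3, 4, 5, 6} := by decide
  refine ⟨![x, a, b, c, d, e, f], ?_, ?_⟩
  · have himg : (Finset.univ.image ![x, a, b, c, d, e, f])
        = insert x (({a, b} : Finset V) ∪ {c, d} ∪ {e, f}) := by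
      rw [huniv]
      simp only [Finset.image_insert, Finset.image_singleton, h0, h1, h2, h3', h4, h5, h6]
      ext y
      simp only [Finset.mem_insert, Finset.mem_union, Finset.mem_singleton]
      tauto
    have hcard : (Finset.univ.image ![x, a, b, c, d, e, f]).card = (Finset.univ : Finset (Fin 7)).card := by
      rw [himg, hdisj]; simp
    have hinj := Finset.card_image_iff.mp hcard
    rw [Finset.coe_univ] at hinj
    exact Set.injOn_univ.mp hinj
  · intro l hl
    fin_cases hl <;>
      simp only [Finset.image_insert, Finset.image_singleton, h0, h1, h2, h3', h4, h5, h6] <;>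
      first
        | exact he₁ | exact he₂ | exact he₃
        | exact hcross _ (by simp) _ (by simp) _ (by simp)
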